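/- Fix an integer s ≥ 1 and p ∈ [0,1]. Let W be an ℕ-valued random variable with pmf μ_j = P(W = j), let α, β : ℕ → [0,∞) with β_0 = 0, and suppose a := E[α(W)] ∈ (0,∞), b := E[β(W)] ∈ (0,∞), E[α(W)(W+1)^s] < ∞ and E[β(W)W^s] < ∞. Let W_α be an ℕ-valued random variable with P(W_α = j) = α_{j−1}μ_{j−1}/a for j ≥ 1, and let (W_β, Y) be a pair of ℕ-valued random variables on some probability space such that P(W_β = j) = β_j μ_j/b for j ≥ 1 and W_β − Y ≥ 0 almost surely. Assume that E[g(W_α)] ≥ p·E[g(W_β − Y)] + (1−p)·g(0) for every s-convex g : ℕ → ℝ whose relevant expectations are finite. Then for every f : ℕ → ℝ with M_s := sup_{k ≥ 0} |Δ^s f(k)| < ∞ and |f(j)| = O(j^s): |E[α(W) f(W+1)] − E[β(W) f(W)]| ≤ Σ_{t=0}^{s−1} |Δ^t f(0)| · |E[α(W) C(W+1, t)] − E[β(W) C(W, t)]| + M_s · ( a·E[C(W_α, s)] − 2ap·E[C(W_β − Y, s)] + (ap + |ap − b|)·E[C(W_β, s)] ). -/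

import Mathlib

open MeasureTheory ProbabilityTheory

/-- Forward difference operator on sequences. -/
noncomputable def ndiff (g : ℕ → ℝ) : ℕ → ℝ := fun j => g (j + 1) - g j


lemma ndiff_iter_succ' (g : ℕ → ℝ) (n : ℕ) (j : ℕ) :
    ndiff^[n + 1] g j = ndiff^[n] g (j + 1) - ndiff^[n] g j := by
  rw [Function.iterate_succ_apply']; rfl

lemma ndiff_iter_add (g h : ℕ → ℝ) (n : ℕ) :
    ndiff^[n] (fun j => g j + h j) = fun j => ndiff^[n] g j + ndiff^[n] h j := by
  induction n generalizing g h with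
  | zero => rfl
  | succ n ih =>
      rw [Function.iterate_succ_apply, Function.iterate_succ_apply,
        Function.iterate_succ_apply]
      have : ndiff (fun j => g j + h j) = fun j => ndiff g j + ndiff h j := by
        funext j; simp [ndiff]; ring
      rw [this, ih]

lemma ndiff_iter_sub (g h : ℕ → ℝ) (n : ℕ) :
    ndiff^[n] (fun j => g j - h j) = fun j => ndiff^[n] g j - ndiff^[n] h j := by
  induction n generalizing g h with
  | zero => rfl
  | succ n ih =>
      rw [Function.iterate_succ_apply, Function.iterate_succ_apply,
        Function.iterate_succ_apply]
      have : ndiff (fun j => g j - h j) = fun j => ndiff g j - ndiff h j := by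
        funext j; simp [ndiff]; ring
      rw [this, ih]

lemma ndiff_iter_smul (c : ℝ) (g : ℕ → ℝ) (n : ℕ) :
    ndiff^[n] (fun j => c * g j) = fun j => c * ndiff^[n] g j := by
  induction n generalizing g with
  | zero => rfl
  | succ n ih =>
      rw [Function.iterate_succ_apply, Function.iterate_succ_apply]
      have : ndiff (fun j => c * g j) = fun j => c * ndiff g j := by
        funext j; simp [ndiff]; ring
      rw [this, ih]

lemma ndiff_iter_sum {ι : Type*} (F : Finset ι) (g : ι → ℕ → ℝ) (n : ℕ) :
    ndiff^[n] (fun j => ∑ t ∈ F, g t j) = fun j => ∑ t ∈ F, ndiff^[n] (g t) j := by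
  classical
  induction F using Finset.induction with
  | empty =>
      simp only [Finset.sum_empty]
      induction n with
      | zero => rfl
      | succ n ih =>
          rw [Function.iterate_succ_apply]
          have : ndiff (fun _ : ℕ => (0:ℝ)) = fun _ => (0:ℝ) := by
            funext j; simp [ndiff]
          rw [this, ih]
  | insert _ _ hx ih =>
      simp only [Finset.sum_insert hx]
      rw [ndiff_iter_add, ih]

lemma ndiff_choose (t : ℕ) :
    ndiff (fun j => ((j.choose (t+1) : ℕ) : ℝ)) = fun j => ((j.choose t : ℕ) : ℝ) := by
  funext j
  simp only [ndiff, Nat.choose_succ_succ]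
  push_cast
  ring

lemma ndiff_iter_choose_self (s : ℕ) :
    ndiff^[s] (fun j => ((j.choose s : ℕ) : ℝ)) = fun _ => (1:ℝ) := by
  induction s with
  | zero => funext j; simp
  | succ s ih =>
      rw [Function.iterate_succ_apply, ndiff_choose, ih]

lemma ndiff_iter_const_zero (m : ℕ) : ndiff^[m] (fun _ : ℕ => (0:ℝ)) = fun _ => (0:ℝ) := by
  induction m with
  | zero => rfl
  | succ m ih =>
      rw [Function.iterate_succ_apply]
      have : ndiff (fun _ : ℕ => (0:ℝ)) = fun _ => (0:ℝ) := by funext j; simp [ndiff]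
      rw [this, ih]

lemma ndiff_iter_choose_zero (t s : ℕ) (h : t < s) :
    ndiff^[s] (fun j => ((j.choose t : ℕ) : ℝ)) = fun _ => (0:ℝ) := by
  obtain ⟨m, rfl⟩ : ∃ m, s = m + (t + 1) := ⟨s - (t+1), by omega⟩
  rw [Function.iterate_add_apply, Function.iterate_succ_apply]
  have h1 : ndiff^[t] (ndiff (fun j => ((j.choose t : ℕ) : ℝ))) =
      ndiff^[t+1] (fun j => ((j.choose t : ℕ) : ℝ)) := by
    rw [Function.iterate_succ_apply]
  rw [h1, Function.iterate_succ_apply', ndiff_iter_choose_self]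
  have : ndiff (fun _ : ℕ => (1:ℝ)) = fun _ => (0:ℝ) := by funext j; simp [ndiff]
  rw [this, ndiff_iter_const_zero]

lemma sum_range_choose' (n k : ℕ) : ∑ m ∈ Finset.range n, m.choose k = n.choose (k+1) := by
  induction n with
  | zero => simp
  | succ n ih => rw [Finset.sum_range_succ, ih, Nat.choose_succ_succ']; omega

lemma sum_coeff (s j : ℕ) :
    ∑ k ∈ Finset.range j, ((j - 1 - k).choose s : ℕ) = j.choose (s+1) := by
  rw [Finset.sum_range_reflect (fun m => (m.choose s : ℕ)) j, sum_range_choose']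

lemma taylor_disc (s : ℕ) : ∀ (f : ℕ → ℝ) (j : ℕ),
    f j = (∑ t ∈ Finset.range (s+1), ndiff^[t] f 0 * ((j.choose t : ℕ) : ℝ)) +
      ∑ k ∈ Finset.range j, (((j - 1 - k).choose s : ℕ) : ℝ) * ndiff^[s+1] f k := by
  induction s with
  | zero =>
      intro f j
      have tel : ∑ k ∈ Finset.range j, (f (k+1) - f k) = f j - f 0 :=
        Finset.sum_range_sub f j
      have e : ∑ k ∈ Finset.range j, (((j - 1 - k).choose 0 : ℕ) : ℝ) * ndiff^[0+1] f k
          = ∑ k ∈ Finset.range j, (f (k+1) - f k) := by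
        apply Finset.sum_congr rfl
        intro k _; simp [ndiff]
      rw [e, tel]
      simp only [zero_add, Finset.sum_range_one, Function.iterate_zero_apply,
        Nat.choose_zero_right, Nat.cast_one, mul_one]
      ring
  | succ s ih =>
      intro f j
      have IH := ih f j
      have tel : ∀ k, ndiff^[s+1] f k = ndiff^[s+1] f 0 +
          ∑ i ∈ Finset.range k, ndiff^[s+2] f i := by
        intro k
        have h1 : ∑ i ∈ Finset.range k, (ndiff^[s+1] f (i+1) - ndiff^[s+1] f i)
            = ndiff^[s+1] f k - ndiff^[s+1] f 0 :=
          Finset.sum_range_sub (fun i => ndiff^[s+1] f i) k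
        have h2 : ∀ i, ndiff^[s+2] f i = ndiff^[s+1] f (i+1) - ndiff^[s+1] f i :=
          fun i => ndiff_iter_succ' f (s+1) i
        rw [show (∑ i ∈ Finset.range k, ndiff^[s+2] f i)
          = ∑ i ∈ Finset.range k, (ndiff^[s+1] f (i+1) - ndiff^[s+1] f i) from
          Finset.sum_congr rfl (fun i _ => h2 i), h1]
        ring
      -- rewrite the remainder
      have hrem : ∑ k ∈ Finset.range j, (((j - 1 - k).choose s : ℕ) : ℝ) * ndiff^[s+1] f k
          = ndiff^[s+1] f 0 * ((j.choose (s+1) : ℕ) : ℝ) +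
            ∑ k ∈ Finset.range j, (((j - 1 - k).choose (s+1) : ℕ) : ℝ) * ndiff^[s+2] f k := by
        have e1 : ∑ k ∈ Finset.range j, (((j - 1 - k).choose s : ℕ) : ℝ) * ndiff^[s+1] f k
            = ∑ k ∈ Finset.range j, ((((j - 1 - k).choose s : ℕ) : ℝ) * ndiff^[s+1] f 0
              + ∑ i ∈ Finset.range j, (if i < k then (((j - 1 - k).choose s : ℕ) : ℝ) * ndiff^[s+2] f i else 0)) := by
          apply Finset.sum_congr rfl
          intro k hk
          rw [tel k]
          have hsub : ∑ i ∈ Finset.range j, (if i < k then (((j - 1 - k).choose s : ℕ) : ℝ) * ndiff^[s+2] f i else 0)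
              = ∑ i ∈ Finset.range k, (((j - 1 - k).choose s : ℕ) : ℝ) * ndiff^[s+2] f i := by
            rw [← Finset.sum_filter]
            apply Finset.sum_congr _ (fun _ _ => rfl)
            ext i
            simp only [Finset.mem_filter, Finset.mem_range]
            have := Finset.mem_range.mp hk
            omega
          rw [hsub, mul_add, Finset.mul_sum]
        rw [e1, Finset.sum_add_distrib]
        congr 1
        · rw [← Finset.sum_mul]
          have : ∑ k ∈ Finset.range j, (((j - 1 - k).choose s : ℕ) : ℝ)
              = ((j.choose (s+1) : ℕ) : ℝ) := by
            rw [← Nat.cast_sum]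
            exact_mod_cast congrArg (Nat.cast (R := ℝ)) (sum_coeff s j)
          rw [this]; ring
        · rw [Finset.sum_comm]
          apply Finset.sum_congr rfl
          intro i hi
          have hswap : ∑ k ∈ Finset.range j, (if i < k then (((j - 1 - k).choose s : ℕ) : ℝ) * ndiff^[s+2] f i else 0)
              = (∑ k ∈ Finset.Ico (i+1) j, (((j - 1 - k).choose s : ℕ) : ℝ)) * ndiff^[s+2] f i := by
            rw [← Finset.sum_filter, Finset.sum_mul]
            apply Finset.sum_congr _ (fun _ _ => rfl)
            ext k
            simp only [Finset.mem_filter, Finset.mem_range, Finset.mem_Ico]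
            omega
          rw [hswap]
          congr 1
          have : ∑ k ∈ Finset.Ico (i+1) j, (((j - 1 - k).choose s : ℕ) : ℝ)
              = (((j - 1 - i).choose (s+1) : ℕ) : ℝ) := by
            rw [← Nat.cast_sum]
            congr 1
            rw [Finset.sum_Ico_eq_sum_range]
            have : ∀ l ∈ Finset.range (j - (i+1)), (j - 1 - (i + 1 + l)).choose s
                = ((j - (i+1)) - 1 - l).choose s := by
              intro l hl; congr 1; omega
            rw [Finset.sum_congr rfl this, sum_coeff s (j - (i+1))]
            congr 1
            omega
          rw [this]
      conv_rhs => rw [Finset.sum_range_succ]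
      rw [IH, hrem]
      ring

noncomputable def nrem (f : ℕ → ℝ) (n : ℕ) (j : ℕ) : ℝ :=
  ∑ k ∈ Finset.range j, (((j - 1 - k).choose n : ℕ) : ℝ) * ndiff^[n+1] f k

lemma nrem_zero (f : ℕ → ℝ) (n : ℕ) : nrem f n 0 = 0 := by simp [nrem]

lemma taylor_nrem (f : ℕ → ℝ) (n j : ℕ) :
    f j = (∑ t ∈ Finset.range (n+1), ndiff^[t] f 0 * ((j.choose t : ℕ) : ℝ)) + nrem f n j :=
  taylor_disc n f j

lemma nrem_abs_le (f : ℕ → ℝ) (n : ℕ) (M : ℝ) (hM : ∀ k, |ndiff^[n+1] f k| ≤ M) (j : ℕ) :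
    |nrem f n j| ≤ M * ((j.choose (n+1) : ℕ) : ℝ) := by
  calc |nrem f n j| ≤ ∑ k ∈ Finset.range j, |(((j - 1 - k).choose n : ℕ) : ℝ) * ndiff^[n+1] f k| :=
        Finset.abs_sum_le_sum_abs _ _
    _ ≤ ∑ k ∈ Finset.range j, (((j - 1 - k).choose n : ℕ) : ℝ) * M := by
        apply Finset.sum_le_sum
        intro k _
        rw [abs_mul, abs_of_nonneg (by positivity)]
        exact mul_le_mul_of_nonneg_left (hM k) (by positivity)
    _ = M * ((j.choose (n+1) : ℕ) : ℝ) := by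
        rw [← Finset.sum_mul, ← Nat.cast_sum, sum_coeff n j, mul_comm]

lemma nrem_lipschitz (f : ℕ → ℝ) (n : ℕ) (M : ℝ) (hM : ∀ k, |ndiff^[n+1] f k| ≤ M)
    {x y : ℕ} (hxy : x ≤ y) :
    |nrem f n y - nrem f n x| ≤ M * (((y.choose (n+1) : ℕ) : ℝ) - ((x.choose (n+1) : ℕ) : ℝ)) := by
  have hy : nrem f n y = (∑ k ∈ Finset.range x, (((y - 1 - k).choose n : ℕ) : ℝ) * ndiff^[n+1] f k)
      + ∑ k ∈ Finset.Ico x y, (((y - 1 - k).choose n : ℕ) : ℝ) * ndiff^[n+1] f k := by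
    rw [nrem, Finset.range_eq_Ico, ← Finset.sum_Ico_consecutive _ (Nat.zero_le x) hxy,
      ← Finset.range_eq_Ico]
  have key : nrem f n y - nrem f n x =
      (∑ k ∈ Finset.range x, ((((y - 1 - k).choose n : ℕ) : ℝ) - (((x - 1 - k).choose n : ℕ) : ℝ)) * ndiff^[n+1] f k)
      + ∑ k ∈ Finset.Ico x y, (((y - 1 - k).choose n : ℕ) : ℝ) * ndiff^[n+1] f k := by
    rw [hy, nrem]
    have e : ∑ k ∈ Finset.range x, ((((y - 1 - k).choose n : ℕ) : ℝ) - (((x - 1 - k).choose n : ℕ) : ℝ)) * ndiff^[n+1] f k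
        = (∑ k ∈ Finset.range x, (((y - 1 - k).choose n : ℕ) : ℝ) * ndiff^[n+1] f k)
          - ∑ k ∈ Finset.range x, (((x - 1 - k).choose n : ℕ) : ℝ) * ndiff^[n+1] f k := by
      rw [← Finset.sum_sub_distrib]
      apply Finset.sum_congr rfl
      intro k _
      ring
    rw [e]
    ring
  rw [key]
  have mono : ∀ k ∈ Finset.range x, (((x - 1 - k).choose n : ℕ) : ℝ) ≤ (((y - 1 - k).choose n : ℕ) : ℝ) := by
    intro k hk
    exact_mod_cast Nat.choose_le_choose n (by omega : x - 1 - k ≤ y - 1 - k)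
  calc |_| ≤ (∑ k ∈ Finset.range x, |((((y - 1 - k).choose n : ℕ) : ℝ) - (((x - 1 - k).choose n : ℕ) : ℝ)) * ndiff^[n+1] f k|)
      + ∑ k ∈ Finset.Ico x y, |(((y - 1 - k).choose n : ℕ) : ℝ) * ndiff^[n+1] f k| := by
        refine (abs_add_le _ _).trans ?_
        gcongr <;> exact Finset.abs_sum_le_sum_abs _ _
    _ ≤ (∑ k ∈ Finset.range x, ((((y - 1 - k).choose n : ℕ) : ℝ) - (((x - 1 - k).choose n : ℕ) : ℝ)) * M)
      + ∑ k ∈ Finset.Ico x y, (((y - 1 - k).choose n : ℕ) : ℝ) * M := by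
        gcongr with k hk k hk
        · rw [abs_mul, abs_of_nonneg (sub_nonneg.mpr (mono k hk))]
          exact mul_le_mul_of_nonneg_left (hM k) (sub_nonneg.mpr (mono k hk))
        · rw [abs_mul, abs_of_nonneg (by positivity)]
          exact mul_le_mul_of_nonneg_left (hM k) (by positivity)
    _ = M * (((y.choose (n+1) : ℕ) : ℝ) - ((x.choose (n+1) : ℕ) : ℝ)) := by
        rw [← Finset.sum_mul, ← Finset.sum_mul, ← add_mul, Finset.sum_sub_distrib]
        have h1 : (∑ k ∈ Finset.range x, (((y - 1 - k).choose n : ℕ) : ℝ))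
            + ∑ k ∈ Finset.Ico x y, (((y - 1 - k).choose n : ℕ) : ℝ)
            = ((y.choose (n+1) : ℕ) : ℝ) := by
          rw [Finset.range_eq_Ico, Finset.sum_Ico_consecutive _ (Nat.zero_le x) hxy,
            ← Finset.range_eq_Ico, ← Nat.cast_sum]
          exact_mod_cast congrArg (Nat.cast (R := ℝ)) (sum_coeff n y)
        have h2 : (∑ k ∈ Finset.range x, (((x - 1 - k).choose n : ℕ) : ℝ))
            = ((x.choose (n+1) : ℕ) : ℝ) := by
          rw [← Nat.cast_sum]
          exact_mod_cast congrArg (Nat.cast (R := ℝ)) (sum_coeff n x)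
        rw [← h1, ← h2]
        ring

lemma ndiff_iter_nrem (f : ℕ → ℝ) (n : ℕ) :
    ndiff^[n+1] (nrem f n) = ndiff^[n+1] f := by
  have hfun : nrem f n = fun j => f j -
      ∑ t ∈ Finset.range (n+1), ndiff^[t] f 0 * ((j.choose t : ℕ) : ℝ) := by
    funext j
    have := taylor_nrem f n j
    linarith
  rw [hfun, ndiff_iter_sub]
  have hz : ndiff^[n+1] (fun j => ∑ t ∈ Finset.range (n+1), ndiff^[t] f 0 * ((j.choose t : ℕ) : ℝ))
      = fun _ => (0:ℝ) := by
    rw [ndiff_iter_sum]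
    funext j
    apply Finset.sum_eq_zero
    intro t ht
    rw [ndiff_iter_smul, ndiff_iter_choose_zero t (n+1) (Finset.mem_range.mp ht)]
    simp
  rw [hz]
  funext j
  simp

set_option linter.unusedSectionVars false

section meas
variable {Ω : Type*} [MeasurableSpace Ω] {P : Measure Ω} [IsProbabilityMeasure P] {X : Ω → ℕ}

lemma map_nat_singleton (hX : Measurable X) (j : ℕ) :
    (P.map X) {j} = P {ω | X ω = j} := by
  rw [Measure.map_apply hX (measurableSet_singleton j)]
  rfl

lemma integrable_comp_nat_iff (hX : Measurable X) (g : ℕ → ℝ) :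
    Integrable (fun ω => g (X ω)) P ↔ Integrable g (P.map X) := by
  rw [integrable_map_measure (measurable_of_countable g).aestronglyMeasurable hX.aemeasurable]
  rfl

lemma integral_comp_nat (hX : Measurable X) {g : ℕ → ℝ} (hg : Integrable (fun ω => g (X ω)) P) :
    ∫ ω, g (X ω) ∂P = ∑' j, (P {ω | X ω = j}).toReal * g j := by
  rw [← integral_map hX.aemeasurable ((measurable_of_countable g).aestronglyMeasurable)]
  rw [integral_countable' ((integrable_comp_nat_iff hX g).mp hg)]
  apply tsum_congr; intro j
  rw [measureReal_def, map_nat_singleton hX, smul_eq_mul]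

lemma summable_abs_comp_nat (hX : Measurable X) {g : ℕ → ℝ}
    (hg : Integrable (fun ω => g (X ω)) P) :
    Summable (fun j => (P {ω | X ω = j}).toReal * |g j|) := by
  have h1 : Integrable g (P.map X) := (integrable_comp_nat_iff hX g).mp hg
  have h2 := h1.hasFiniteIntegral
  rw [HasFiniteIntegral, lintegral_countable'] at h2
  have h3 : Summable (fun j => (((‖g j‖₊ : ENNReal) * (P.map X) {j}).toReal)) :=
    ENNReal.summable_toReal h2.ne
  have h4 : (fun j => (((‖g j‖₊ : ENNReal) * (P.map X) {j}).toReal))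
      = fun j => (P {ω | X ω = j}).toReal * |g j| := by
    funext j
    rw [ENNReal.toReal_mul, map_nat_singleton hX]
    simp [Real.norm_eq_abs, mul_comm]
  rwa [h4] at h3

lemma summable_comp_nat (hX : Measurable X) {g : ℕ → ℝ}
    (hg : Integrable (fun ω => g (X ω)) P) :
    Summable (fun j => (P {ω | X ω = j}).toReal * g j) := by
  apply Summable.of_abs
  have := summable_abs_comp_nat hX hg
  apply this.congr
  intro j
  rw [abs_mul, abs_of_nonneg ENNReal.toReal_nonneg]

lemma integrable_comp_nat_of_summable (hX : Measurable X) {g : ℕ → ℝ}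
    (h : Summable (fun j => (P {ω | X ω = j}).toReal * |g j|)) :
    Integrable (fun ω => g (X ω)) P := by
  rw [integrable_comp_nat_iff hX]
  refine ⟨(measurable_of_countable g).aestronglyMeasurable, ?_⟩
  rw [HasFiniteIntegral, lintegral_countable']
  have key : ∀ j : ℕ, ‖g j‖ₑ * (P.map X) {j}
      = ENNReal.ofReal ((P {ω | X ω = j}).toReal * |g j|) := by
    intro j
    rw [map_nat_singleton hX,
      ENNReal.ofReal_mul ENNReal.toReal_nonneg,
      ENNReal.ofReal_toReal (measure_ne_top P _)]
    rw [← Real.norm_eq_abs, ofReal_norm]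
    ring
  rw [tsum_congr key, ← ENNReal.ofReal_tsum_of_nonneg (fun j => by positivity) h]
  exact ENNReal.ofReal_lt_top

end meas

lemma conv_aux (f : ℕ → ℝ) (n : ℕ) (M ε : ℝ) (hε : |ε| = 1)
    (hM : ∀ k, |ndiff^[n+1] f k| ≤ M) (j : ℕ) :
    0 ≤ ndiff^[n+1] (fun i => M * ((i.choose (n+1) : ℕ) : ℝ) + ε * nrem f n i) j := by
  have h1 : ndiff^[n+1] (fun i => M * ((i.choose (n+1) : ℕ) : ℝ) + ε * nrem f n i)
      = fun i => M * 1 + ε * ndiff^[n+1] f i := by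
    rw [ndiff_iter_add]
    funext i
    rw [ndiff_iter_smul, ndiff_iter_smul, ndiff_iter_choose_self, ndiff_iter_nrem]
  rw [h1]
  show 0 ≤ M * 1 + ε * ndiff^[n+1] f j
  have h2 : |ε * ndiff^[n+1] f j| ≤ M := by rw [abs_mul, hε, one_mul]; exact hM j
  have h3 := neg_abs_le (ε * ndiff^[n+1] f j)
  linarith

lemma cancel_aux {a x y : ℝ} (ha : a ≠ 0) : a * (x / a * y) = x * y := by
  field_simp

lemma abs_integral_le {Ω : Type*} [MeasurableSpace Ω] (P : MeasureTheory.Measure Ω) (f : Ω → ℝ) :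
    |∫ ω, f ω ∂P| ≤ ∫ ω, |f ω| ∂P := by
  simpa [Real.norm_eq_abs] using MeasureTheory.norm_integral_le_integral_norm (μ := P) f

/-- Proposition 2 of Daly, Lefèvre, Utev: an `s`-order Stein bound under the
`s`-convex stochastic ordering `W_α ⪰_{s-cx} v_p (W_β - Y)`. -/
theorem stmt1
    {Ω Ω₁ Ω₂ : Type*} [MeasurableSpace Ω] [MeasurableSpace Ω₁] [MeasurableSpace Ω₂]
    (P : Measure Ω) [IsProbabilityMeasure P]
    (P₁ : Measure Ω₁) [IsProbabilityMeasure P₁]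
    (P₂ : Measure Ω₂) [IsProbabilityMeasure P₂]
    (s : ℕ) (hs : 1 ≤ s) (p : ℝ) (hp0 : 0 ≤ p) (hp1 : p ≤ 1)
    (W : Ω → ℕ) (hW : Measurable W)
    (α β : ℕ → ℝ) (hα : ∀ j, 0 ≤ α j) (hβ : ∀ j, 0 ≤ β j) (hβ0 : β 0 = 0)
    (μ : ℕ → ℝ) (hμ : ∀ j, μ j = (P {ω | W ω = j}).toReal)
    (a b : ℝ) (ha0 : 0 < a) (hb0 : 0 < b)
    (ha : ∫ ω, α (W ω) ∂P = a) (hb : ∫ ω, β (W ω) ∂P = b)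
    (hintα : Integrable (fun ω => α (W ω) * ((W ω : ℝ) + 1) ^ s) P)
    (hintβ : Integrable (fun ω => β (W ω) * (W ω : ℝ) ^ s) P)
    (Wα : Ω₁ → ℕ) (hWα : Measurable Wα)
    (hWαpmf : ∀ j : ℕ, 1 ≤ j → (P₁ {ω | Wα ω = j}).toReal = α (j - 1) * μ (j - 1) / a)
    (Wβ Y : Ω₂ → ℕ) (hWβ : Measurable Wβ) (hY : Measurable Y)
    (hWβpmf : ∀ j : ℕ, 1 ≤ j → (P₂ {ω | Wβ ω = j}).toReal = β j * μ j / b)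
    (hYW : ∀ᵐ ω ∂P₂, Y ω ≤ Wβ ω)
    (hord : ∀ g : ℕ → ℝ, (∀ j, 0 ≤ ndiff^[s] g j) →
      Integrable (fun ω => g (Wα ω)) P₁ →
      Integrable (fun ω => g (Wβ ω - Y ω)) P₂ →
      p * (∫ ω, g (Wβ ω - Y ω) ∂P₂) + (1 - p) * g 0 ≤ ∫ ω, g (Wα ω) ∂P₁)
    (f : ℕ → ℝ) (M : ℝ) (hM : ∀ k : ℕ, |ndiff^[s] f k| ≤ M)
    (K : ℝ) (hK : ∀ j : ℕ, |f j| ≤ K * ((j : ℝ) + 1) ^ s) :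
    |(∫ ω, α (W ω) * f (W ω + 1) ∂P) - ∫ ω, β (W ω) * f (W ω) ∂P| ≤
      (∑ t ∈ Finset.range s, |ndiff^[t] f 0| *
        |(∫ ω, α (W ω) * (Nat.choose (W ω + 1) t : ℝ) ∂P) -
          ∫ ω, β (W ω) * (Nat.choose (W ω) t : ℝ) ∂P|) +
      M * (a * (∫ ω, (Nat.choose (Wα ω) s : ℝ) ∂P₁)
        - 2 * a * p * (∫ ω, (Nat.choose (Wβ ω - Y ω) s : ℝ) ∂P₂)
        + (a * p + |a * p - b|) * ∫ ω, (Nat.choose (Wβ ω) s : ℝ) ∂P₂) := by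
  obtain ⟨n, rfl⟩ : ∃ n, s = n + 1 := ⟨s - 1, by omega⟩
  have hM0 : 0 ≤ M := (abs_nonneg _).trans (hM 0)
  have hK0 : 0 ≤ K := by
    have h := hK 0
    have h2 := abs_nonneg (f 0)
    simp at h
    linarith
  have hμ' : ∀ j, (P {ω | W ω = j}).toReal = μ j := fun j => (hμ j).symm
  -- generic integrability on P, α side
  have intArel : ∀ (g : ℕ → ℝ) (c : ℝ), 0 ≤ c →
      (∀ j : ℕ, |g (j+1)| ≤ c * ((j:ℝ)+1)^(n+1)) →
      Integrable (fun ω => α (W ω) * g (W ω + 1)) P := by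
    intro g c hc hgc
    refine Integrable.mono (hintα.const_mul c)
      (((measurable_of_countable fun j => α j * g (j+1)).comp hW).aestronglyMeasurable) ?_
    filter_upwards with ω
    rw [Real.norm_eq_abs, Real.norm_eq_abs, abs_mul, abs_of_nonneg (hα _)]
    have h2 : α (W ω) * |g (W ω + 1)| ≤ α (W ω) * (c * ((W ω : ℝ)+1)^(n+1)) :=
      mul_le_mul_of_nonneg_left (hgc (W ω)) (hα _)
    refine h2.trans (le_of_eq ?_)
    rw [abs_of_nonneg (mul_nonneg hc (mul_nonneg (hα _) (by positivity)))]
    ring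
  have intBrel : ∀ (g : ℕ → ℝ) (c : ℝ), 0 ≤ c →
      (∀ j : ℕ, 1 ≤ j → |g j| ≤ c * (j:ℝ)^(n+1)) →
      Integrable (fun ω => β (W ω) * g (W ω)) P := by
    intro g c hc hgc
    refine Integrable.mono (hintβ.const_mul c)
      (((measurable_of_countable fun j => β j * g j).comp hW).aestronglyMeasurable) ?_
    filter_upwards with ω
    rw [Real.norm_eq_abs, Real.norm_eq_abs, abs_mul, abs_of_nonneg (hβ _)]
    rcases Nat.eq_zero_or_pos (W ω) with h0 | h0
    · rw [h0, hβ0, zero_mul]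
      exact abs_nonneg _
    · have h2 : β (W ω) * |g (W ω)| ≤ β (W ω) * (c * ((W ω : ℝ))^(n+1)) :=
        mul_le_mul_of_nonneg_left (hgc (W ω) h0) (hβ _)
      refine h2.trans (le_of_eq ?_)
      rw [abs_of_nonneg (mul_nonneg hc (mul_nonneg (hβ _) (by positivity)))]
      ring
  -- specific integrabilities on P
  have int_fα : Integrable (fun ω => α (W ω) * f (W ω + 1)) P := by
    apply intArel f (K * 2^(n+1)) (by positivity)
    intro j
    have h1 : |f (j+1)| ≤ K * ((j:ℝ)+1+1)^(n+1) := by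
      have h := hK (j+1); push_cast at h; exact h
    have h2 : ((j:ℝ)+1+1)^(n+1) ≤ (2*((j:ℝ)+1))^(n+1) :=
      pow_le_pow_left₀ (by positivity) (by linarith) _
    calc |f (j+1)| ≤ K * ((j:ℝ)+1+1)^(n+1) := h1
      _ ≤ K * (2*((j:ℝ)+1))^(n+1) := mul_le_mul_of_nonneg_left h2 hK0
      _ = K * 2^(n+1) * ((j:ℝ)+1)^(n+1) := by rw [mul_pow]; ring
  have int_fβ : Integrable (fun ω => β (W ω) * f (W ω)) P := by
    apply intBrel f (K * 2^(n+1)) (by positivity)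
    intro j hj
    have hj1 : (1:ℝ) ≤ (j:ℝ) := by exact_mod_cast hj
    have h2 : ((j:ℝ)+1)^(n+1) ≤ (2*(j:ℝ))^(n+1) :=
      pow_le_pow_left₀ (by positivity) (by linarith) _
    calc |f j| ≤ K * ((j:ℝ)+1)^(n+1) := hK j
      _ ≤ K * (2*(j:ℝ))^(n+1) := mul_le_mul_of_nonneg_left h2 hK0
      _ = K * 2^(n+1) * (j:ℝ)^(n+1) := by rw [mul_pow]; ring
  have int_Cα : ∀ t : ℕ, t ≤ n+1 →
      Integrable (fun ω => α (W ω) * ((Nat.choose (W ω + 1) t : ℕ) : ℝ)) P := by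
    intro t ht
    apply intArel (fun j => ((Nat.choose j t : ℕ) : ℝ)) 1 zero_le_one
    intro j
    rw [abs_of_nonneg (by positivity), one_mul]
    have h1 : (j+1).choose t ≤ (j+1)^(n+1) :=
      (Nat.choose_le_pow (j+1) t).trans
        (Nat.pow_le_pow_right (Nat.succ_le_succ (Nat.zero_le j)) ht)
    exact_mod_cast h1
  have int_Cβ : ∀ t : ℕ, t ≤ n+1 →
      Integrable (fun ω => β (W ω) * ((Nat.choose (W ω) t : ℕ) : ℝ)) P := by
    intro t ht
    apply intBrel (fun j => ((Nat.choose j t : ℕ) : ℝ)) 1 zero_le_one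
    intro j hj
    rw [abs_of_nonneg (by positivity), one_mul]
    have h1 : j.choose t ≤ j^(n+1) :=
      (Nat.choose_le_pow j t).trans (Nat.pow_le_pow_right hj ht)
    exact_mod_cast h1
  have int_Rα0 : Integrable (fun ω => α (W ω) * nrem f n (W ω + 1)) P := by
    apply intArel (nrem f n) M hM0
    intro j
    refine (nrem_abs_le f n M hM (j+1)).trans ?_
    have h1 : (j+1).choose (n+1) ≤ (j+1)^(n+1) := Nat.choose_le_pow (j+1) (n+1)
    have h2 : (((j+1).choose (n+1) : ℕ) : ℝ) ≤ ((j:ℝ)+1)^(n+1) := by exact_mod_cast h1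
    exact mul_le_mul_of_nonneg_left h2 hM0
  have int_Rβ0 : Integrable (fun ω => β (W ω) * nrem f n (W ω)) P := by
    apply intBrel (nrem f n) M hM0
    intro j hj
    refine (nrem_abs_le f n M hM j).trans ?_
    have h1 : j.choose (n+1) ≤ j^(n+1) := Nat.choose_le_pow j (n+1)
    have h2 : ((j.choose (n+1) : ℕ) : ℝ) ≤ ((j:ℝ))^(n+1) := by exact_mod_cast h1
    exact mul_le_mul_of_nonneg_left h2 hM0
  -- transfer lemmas
  have trans₁ : ∀ g : ℕ → ℝ, g 0 = 0 →
      Integrable (fun ω => α (W ω) * g (W ω + 1)) P →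
      Integrable (fun ω => g (Wα ω)) P₁ ∧
        ∫ ω, α (W ω) * g (W ω + 1) ∂P = a * ∫ ω, g (Wα ω) ∂P₁ := by
    intro g hg0 hint
    have hint_abs : Integrable (fun ω => α (W ω) * |g (W ω + 1)|) P :=
      hint.abs.congr (Filter.Eventually.of_forall fun ω => by
        show |α (W ω) * g (W ω + 1)| = α (W ω) * |g (W ω + 1)|
        rw [abs_mul, abs_of_nonneg (hα _)])
    have hsum_abs : Summable (fun j => μ j * (α j * |g (j+1)|)) :=
      (summable_comp_nat hW (g := fun j => α j * |g (j+1)|) hint_abs).congr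
        (fun j => by rw [hμ'])
    have hq1 : ∀ j : ℕ, (P₁ {ω | Wα ω = j+1}).toReal = α j * μ j / a := by
      intro j
      have h := hWαpmf (j+1) (by omega)
      simpa using h
    have hsum1 : Summable (fun j => (P₁ {ω | Wα ω = j}).toReal * |g j|) := by
      have h2 : Summable (fun j => (P₁ {ω | Wα ω = j+1}).toReal * |g (j+1)|) := by
        refine (hsum_abs.div_const a).congr fun j => ?_
        rw [hq1 j]; ring
      exact (_root_.summable_nat_add_iff 1).mp h2
    have hint1 : Integrable (fun ω => g (Wα ω)) P₁ :=
      integrable_comp_nat_of_summable hWα hsum1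
    refine ⟨hint1, ?_⟩
    have e1 : ∫ ω, α (W ω) * g (W ω + 1) ∂P = ∑' j, μ j * (α j * g (j+1)) :=
      (integral_comp_nat hW (g := fun j => α j * g (j+1)) hint).trans
        (tsum_congr fun j => by rw [hμ'])
    have hsum2 : Summable (fun j => (P₁ {ω | Wα ω = j}).toReal * g j) :=
      summable_comp_nat hWα hint1
    have e2 : ∫ ω, g (Wα ω) ∂P₁ = ∑' j, (P₁ {ω | Wα ω = j}).toReal * g j :=
      integral_comp_nat hWα hint1
    rw [e1, e2, Summable.tsum_eq_zero_add hsum2]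
    show ∑' j, μ j * (α j * g (j+1))
        = a * ((P₁ {ω | Wα ω = 0}).toReal * g 0 + ∑' j, (P₁ {ω | Wα ω = j+1}).toReal * g (j+1))
    rw [hg0, mul_zero, zero_add, ← _root_.tsum_mul_left]
    exact tsum_congr fun j => by rw [hq1 j, cancel_aux ha0.ne']; ring
  have trans₂ : ∀ g : ℕ → ℝ, g 0 = 0 →
      Integrable (fun ω => β (W ω) * g (W ω)) P →
      Integrable (fun ω => g (Wβ ω)) P₂ ∧
        ∫ ω, β (W ω) * g (W ω) ∂P = b * ∫ ω, g (Wβ ω) ∂P₂ := by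
    intro g hg0 hint
    have hint_abs : Integrable (fun ω => β (W ω) * |g (W ω)|) P :=
      hint.abs.congr (Filter.Eventually.of_forall fun ω => by
        show |β (W ω) * g (W ω)| = β (W ω) * |g (W ω)|
        rw [abs_mul, abs_of_nonneg (hβ _)])
    have hsum_abs : Summable (fun j => μ j * (β j * |g j|)) :=
      (summable_comp_nat hW (g := fun j => β j * |g j|) hint_abs).congr
        (fun j => by rw [hμ'])
    have hq2 : ∀ j : ℕ, (P₂ {ω | Wβ ω = j+1}).toReal = β (j+1) * μ (j+1) / b :=
      fun j => hWβpmf (j+1) (by omega)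
    have hsum1 : Summable (fun j => (P₂ {ω | Wβ ω = j}).toReal * |g j|) := by
      have h3 : Summable (fun j => μ (j+1) * (β (j+1) * |g (j+1)|)) :=
        (_root_.summable_nat_add_iff 1).mpr hsum_abs
      have h2 : Summable (fun j => (P₂ {ω | Wβ ω = j+1}).toReal * |g (j+1)|) := by
        refine (h3.div_const b).congr fun j => ?_
        rw [hq2 j]; ring
      exact (_root_.summable_nat_add_iff 1).mp h2
    have hint1 : Integrable (fun ω => g (Wβ ω)) P₂ :=
      integrable_comp_nat_of_summable hWβ hsum1
    refine ⟨hint1, ?_⟩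
    have hsumμ : Summable (fun j => μ j * (β j * g j)) :=
      (summable_comp_nat hW (g := fun j => β j * g j) hint).congr (fun j => by rw [hμ'])
    have e1 : ∫ ω, β (W ω) * g (W ω) ∂P = ∑' j, μ j * (β j * g j) :=
      (integral_comp_nat hW (g := fun j => β j * g j) hint).trans
        (tsum_congr fun j => by rw [hμ'])
    have hsum2 : Summable (fun j => (P₂ {ω | Wβ ω = j}).toReal * g j) :=
      summable_comp_nat hWβ hint1
    have e2 : ∫ ω, g (Wβ ω) ∂P₂ = ∑' j, (P₂ {ω | Wβ ω = j}).toReal * g j :=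
      integral_comp_nat hWβ hint1
    rw [e1, e2, Summable.tsum_eq_zero_add hsum2, Summable.tsum_eq_zero_add hsumμ]
    show μ 0 * (β 0 * g 0) + ∑' j, μ (j+1) * (β (j+1) * g (j+1))
        = b * ((P₂ {ω | Wβ ω = 0}).toReal * g 0 + ∑' j, (P₂ {ω | Wβ ω = j+1}).toReal * g (j+1))
    rw [hg0, mul_zero, mul_zero, mul_zero, zero_add, zero_add, ← _root_.tsum_mul_left]
    exact tsum_congr fun j => by rw [hq2 j, cancel_aux hb0.ne']; ring
  -- choose (0) vanishing
  have hC0 : ((Nat.choose 0 (n+1) : ℕ) : ℝ) = 0 := by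
    simp [Nat.choose_eq_zero_of_lt (Nat.succ_pos n)]
  -- transfers
  have hCWα := trans₁ (fun j => ((Nat.choose j (n+1) : ℕ) : ℝ)) hC0 (int_Cα (n+1) le_rfl)
  have int_CWα : Integrable (fun ω => ((Nat.choose (Wα ω) (n+1) : ℕ) : ℝ)) P₁ := hCWα.1
  have hRWα := trans₁ (nrem f n) (nrem_zero f n) int_Rα0
  have int_RWα : Integrable (fun ω => nrem f n (Wα ω)) P₁ := hRWα.1
  have eRα : ∫ ω, α (W ω) * nrem f n (W ω + 1) ∂P = a * ∫ ω, nrem f n (Wα ω) ∂P₁ := hRWα.2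
  have hCWβ := trans₂ (fun j => ((Nat.choose j (n+1) : ℕ) : ℝ)) hC0 (int_Cβ (n+1) le_rfl)
  have int_CWβ : Integrable (fun ω => ((Nat.choose (Wβ ω) (n+1) : ℕ) : ℝ)) P₂ := hCWβ.1
  have hRWβ := trans₂ (nrem f n) (nrem_zero f n) int_Rβ0
  have int_RWβ : Integrable (fun ω => nrem f n (Wβ ω)) P₂ := hRWβ.1
  have eRβ : ∫ ω, β (W ω) * nrem f n (W ω) ∂P = b * ∫ ω, nrem f n (Wβ ω) ∂P₂ := hRWβ.2
  -- Wβ - Y side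
  have mWβY : Measurable fun ω => Wβ ω - Y ω :=
    (measurable_of_countable (fun q : ℕ × ℕ => q.1 - q.2)).comp (hWβ.prodMk hY)
  have int_CWβY : Integrable (fun ω => ((Nat.choose (Wβ ω - Y ω) (n+1) : ℕ) : ℝ)) P₂ := by
    refine Integrable.mono int_CWβ
      ((measurable_of_countable (fun j => ((Nat.choose j (n+1) : ℕ) : ℝ))).comp
        mWβY).aestronglyMeasurable ?_
    filter_upwards with ω
    rw [Real.norm_eq_abs, Real.norm_eq_abs, abs_of_nonneg (by positivity),
      abs_of_nonneg (by positivity)]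
    exact_mod_cast Nat.choose_le_choose (n+1) (Nat.sub_le _ _)
  have int_RWβY : Integrable (fun ω => nrem f n (Wβ ω - Y ω)) P₂ := by
    refine Integrable.mono (int_CWβ.const_mul M)
      ((measurable_of_countable (nrem f n)).comp mWβY).aestronglyMeasurable ?_
    filter_upwards with ω
    rw [Real.norm_eq_abs, Real.norm_eq_abs]
    refine (nrem_abs_le f n M hM _).trans ?_
    rw [abs_of_nonneg (mul_nonneg hM0 (by positivity))]
    exact mul_le_mul_of_nonneg_left
      (by exact_mod_cast Nat.choose_le_choose (n+1) (Nat.sub_le _ _)) hM0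
  -- ordering applications
  have hordε : ∀ ε : ℝ, |ε| = 1 →
      p * (M * (∫ ω, ((Nat.choose (Wβ ω - Y ω) (n+1) : ℕ) : ℝ) ∂P₂)
            + ε * ∫ ω, nrem f n (Wβ ω - Y ω) ∂P₂)
        ≤ M * (∫ ω, ((Nat.choose (Wα ω) (n+1) : ℕ) : ℝ) ∂P₁)
            + ε * ∫ ω, nrem f n (Wα ω) ∂P₁ := by
    intro ε hε
    have key := hord (fun i => M * ((Nat.choose i (n+1) : ℕ) : ℝ) + ε * nrem f n i)
      (conv_aux f n M ε hε hM)
      ((int_CWα.const_mul M).add (int_RWα.const_mul ε))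
      ((int_CWβY.const_mul M).add (int_RWβY.const_mul ε))
    have key' : p * (∫ ω, (M * ((Nat.choose (Wβ ω - Y ω) (n+1) : ℕ) : ℝ)
          + ε * nrem f n (Wβ ω - Y ω)) ∂P₂)
        + (1 - p) * (M * ((Nat.choose 0 (n+1) : ℕ) : ℝ) + ε * nrem f n 0)
        ≤ ∫ ω, (M * ((Nat.choose (Wα ω) (n+1) : ℕ) : ℝ) + ε * nrem f n (Wα ω)) ∂P₁ := key
    have e0 : M * ((Nat.choose 0 (n+1) : ℕ) : ℝ) + ε * nrem f n 0 = 0 := by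
      rw [hC0, nrem_zero]; ring
    have e1 : ∫ ω, (M * ((Nat.choose (Wα ω) (n+1) : ℕ) : ℝ) + ε * nrem f n (Wα ω)) ∂P₁
        = M * (∫ ω, ((Nat.choose (Wα ω) (n+1) : ℕ) : ℝ) ∂P₁)
          + ε * ∫ ω, nrem f n (Wα ω) ∂P₁ := by
      rw [integral_add (int_CWα.const_mul M) (int_RWα.const_mul ε),
        integral_const_mul, integral_const_mul]
    have e2 : ∫ ω, (M * ((Nat.choose (Wβ ω - Y ω) (n+1) : ℕ) : ℝ)
          + ε * nrem f n (Wβ ω - Y ω)) ∂P₂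
        = M * (∫ ω, ((Nat.choose (Wβ ω - Y ω) (n+1) : ℕ) : ℝ) ∂P₂)
          + ε * ∫ ω, nrem f n (Wβ ω - Y ω) ∂P₂ := by
      rw [integral_add (int_CWβY.const_mul M) (int_RWβY.const_mul ε),
        integral_const_mul, integral_const_mul]
    rw [e0, e1, e2] at key'
    linarith
  have habs1 : |(∫ ω, nrem f n (Wα ω) ∂P₁) - p * ∫ ω, nrem f n (Wβ ω - Y ω) ∂P₂|
      ≤ M * (∫ ω, ((Nat.choose (Wα ω) (n+1) : ℕ) : ℝ) ∂P₁)
        - p * (M * ∫ ω, ((Nat.choose (Wβ ω - Y ω) (n+1) : ℕ) : ℝ) ∂P₂) := by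
    have h1 := hordε 1 (by norm_num)
    have h2 := hordε (-1) (by norm_num)
    rw [one_mul, mul_add] at h1
    rw [neg_one_mul, neg_one_mul, mul_add, mul_neg] at h2
    rw [abs_le]
    constructor <;> linarith
  have habs2 : |(∫ ω, nrem f n (Wβ ω - Y ω) ∂P₂) - ∫ ω, nrem f n (Wβ ω) ∂P₂|
      ≤ M * ((∫ ω, ((Nat.choose (Wβ ω) (n+1) : ℕ) : ℝ) ∂P₂)
        - ∫ ω, ((Nat.choose (Wβ ω - Y ω) (n+1) : ℕ) : ℝ) ∂P₂) := by
    rw [← integral_sub int_RWβY int_RWβ]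
    calc |∫ ω, (nrem f n (Wβ ω - Y ω) - nrem f n (Wβ ω)) ∂P₂|
        ≤ ∫ ω, |nrem f n (Wβ ω - Y ω) - nrem f n (Wβ ω)| ∂P₂ :=
          abs_integral_le P₂ _
      _ ≤ ∫ ω, M * (((Nat.choose (Wβ ω) (n+1) : ℕ) : ℝ)
            - ((Nat.choose (Wβ ω - Y ω) (n+1) : ℕ) : ℝ)) ∂P₂ := by
          refine integral_mono ((int_RWβY.sub int_RWβ).abs)
            ((int_CWβ.sub int_CWβY).const_mul M) ?_
          intro ω
          show |nrem f n (Wβ ω - Y ω) - nrem f n (Wβ ω)|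
            ≤ M * (((Nat.choose (Wβ ω) (n+1) : ℕ) : ℝ) - ((Nat.choose (Wβ ω - Y ω) (n+1) : ℕ) : ℝ))
          rw [abs_sub_comm]
          exact nrem_lipschitz f n M hM (Nat.sub_le _ _)
      _ = M * ((∫ ω, ((Nat.choose (Wβ ω) (n+1) : ℕ) : ℝ) ∂P₂)
            - ∫ ω, ((Nat.choose (Wβ ω - Y ω) (n+1) : ℕ) : ℝ) ∂P₂) := by
          rw [integral_const_mul, integral_sub int_CWβ int_CWβY]
  have habs3 : |∫ ω, nrem f n (Wβ ω) ∂P₂|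
      ≤ M * ∫ ω, ((Nat.choose (Wβ ω) (n+1) : ℕ) : ℝ) ∂P₂ := by
    calc |∫ ω, nrem f n (Wβ ω) ∂P₂| ≤ ∫ ω, |nrem f n (Wβ ω)| ∂P₂ :=
          abs_integral_le P₂ _
      _ ≤ ∫ ω, M * ((Nat.choose (Wβ ω) (n+1) : ℕ) : ℝ) ∂P₂ :=
          integral_mono int_RWβ.abs (int_CWβ.const_mul M)
            (fun ω => nrem_abs_le f n M hM _)
      _ = M * ∫ ω, ((Nat.choose (Wβ ω) (n+1) : ℕ) : ℝ) ∂P₂ := integral_const_mul _ _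
  -- the remainder bound
  have hrem : |a * (∫ ω, nrem f n (Wα ω) ∂P₁) - b * ∫ ω, nrem f n (Wβ ω) ∂P₂|
      ≤ M * (a * (∫ ω, (Nat.choose (Wα ω) (n+1) : ℝ) ∂P₁)
        - 2 * a * p * (∫ ω, (Nat.choose (Wβ ω - Y ω) (n+1) : ℝ) ∂P₂)
        + (a * p + |a * p - b|) * ∫ ω, (Nat.choose (Wβ ω) (n+1) : ℝ) ∂P₂) := by
    set E1 := ∫ ω, nrem f n (Wα ω) ∂P₁
    set E2 := ∫ ω, nrem f n (Wβ ω - Y ω) ∂P₂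
    set E3 := ∫ ω, nrem f n (Wβ ω) ∂P₂
    set C1 := ∫ ω, ((Nat.choose (Wα ω) (n+1) : ℕ) : ℝ) ∂P₁
    set C2 := ∫ ω, ((Nat.choose (Wβ ω - Y ω) (n+1) : ℕ) : ℝ) ∂P₂
    set C3 := ∫ ω, ((Nat.choose (Wβ ω) (n+1) : ℕ) : ℝ) ∂P₂
    have key : a * E1 - b * E3 = a * (E1 - p * E2) + (a*p) * (E2 - E3) + (a*p - b) * E3 := by
      ring
    calc |a * E1 - b * E3|
        = |a * (E1 - p * E2) + (a*p) * (E2 - E3) + (a*p - b) * E3| := by rw [key]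
      _ ≤ |a * (E1 - p * E2)| + |(a*p) * (E2 - E3)| + |(a*p - b) * E3| :=
          abs_add_three _ _ _
      _ = a * |E1 - p * E2| + (a*p) * |E2 - E3| + |a*p - b| * |E3| := by
          rw [abs_mul a (E1 - p * E2), abs_mul (a*p) (E2 - E3), abs_mul (a*p - b) E3,
            abs_of_nonneg ha0.le, abs_of_nonneg (mul_nonneg ha0.le hp0)]
      _ ≤ a * (M * C1 - p * (M * C2)) + (a*p) * (M * (C3 - C2)) + |a*p - b| * (M * C3) :=
          add_le_add (add_le_add (mul_le_mul_of_nonneg_left habs1 ha0.le)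
            (mul_le_mul_of_nonneg_left habs2 (mul_nonneg ha0.le hp0)))
            (mul_le_mul_of_nonneg_left habs3 (abs_nonneg _))
      _ = M * (a * C1 - 2 * a * p * C2 + (a * p + |a * p - b|) * C3) := by ring
  -- decomposition of the two main integrals
  have hdecα : ∫ ω, α (W ω) * f (W ω + 1) ∂P
      = (∑ t ∈ Finset.range (n+1), ndiff^[t] f 0 *
          ∫ ω, α (W ω) * (Nat.choose (W ω + 1) t : ℝ) ∂P)
        + a * ∫ ω, nrem f n (Wα ω) ∂P₁ := by
    have hpt : (fun ω => α (W ω) * f (W ω + 1)) = fun ω =>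
        (∑ t ∈ Finset.range (n+1), ndiff^[t] f 0 *
          (α (W ω) * ((Nat.choose (W ω + 1) t : ℕ) : ℝ)))
          + α (W ω) * nrem f n (W ω + 1) := by
      funext ω
      rw [taylor_nrem f n (W ω + 1), mul_add, Finset.mul_sum]
      congr 1
      exact Finset.sum_congr rfl fun t _ => by ring
    rw [hpt, integral_add (integrable_finset_sum _ fun t ht =>
        (int_Cα t (by have := Finset.mem_range.mp ht; omega)).const_mul _) int_Rα0,
      integral_finset_sum _ (fun t ht =>
        (int_Cα t (by have := Finset.mem_range.mp ht; omega)).const_mul _), eRα]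
    congr 1
    exact Finset.sum_congr rfl fun t _ => integral_const_mul _ _
  have hdecβ : ∫ ω, β (W ω) * f (W ω) ∂P
      = (∑ t ∈ Finset.range (n+1), ndiff^[t] f 0 *
          ∫ ω, β (W ω) * (Nat.choose (W ω) t : ℝ) ∂P)
        + b * ∫ ω, nrem f n (Wβ ω) ∂P₂ := by
    have hpt : (fun ω => β (W ω) * f (W ω)) = fun ω =>
        (∑ t ∈ Finset.range (n+1), ndiff^[t] f 0 *
          (β (W ω) * ((Nat.choose (W ω) t : ℕ) : ℝ)))
          + β (W ω) * nrem f n (W ω) := by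
      funext ω
      rw [taylor_nrem f n (W ω), mul_add, Finset.mul_sum]
      congr 1
      exact Finset.sum_congr rfl fun t _ => by ring
    rw [hpt, integral_add (integrable_finset_sum _ fun t ht =>
        (int_Cβ t (by have := Finset.mem_range.mp ht; omega)).const_mul _) int_Rβ0,
      integral_finset_sum _ (fun t ht =>
        (int_Cβ t (by have := Finset.mem_range.mp ht; omega)).const_mul _), eRβ]
    congr 1
    exact Finset.sum_congr rfl fun t _ => integral_const_mul _ _
  -- final assembly
  rw [hdecα, hdecβ]
  have e : ((∑ t ∈ Finset.range (n+1), ndiff^[t] f 0 *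
        ∫ ω, α (W ω) * (Nat.choose (W ω + 1) t : ℝ) ∂P)
        + a * ∫ ω, nrem f n (Wα ω) ∂P₁)
      - ((∑ t ∈ Finset.range (n+1), ndiff^[t] f 0 *
        ∫ ω, β (W ω) * (Nat.choose (W ω) t : ℝ) ∂P)
        + b * ∫ ω, nrem f n (Wβ ω) ∂P₂)
      = (∑ t ∈ Finset.range (n+1), ndiff^[t] f 0 *
          ((∫ ω, α (W ω) * (Nat.choose (W ω + 1) t : ℝ) ∂P)
            - ∫ ω, β (W ω) * (Nat.choose (W ω) t : ℝ) ∂P))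
        + (a * (∫ ω, nrem f n (Wα ω) ∂P₁) - b * ∫ ω, nrem f n (Wβ ω) ∂P₂) := by
    rw [show (∑ t ∈ Finset.range (n+1), ndiff^[t] f 0 *
          ((∫ ω, α (W ω) * (Nat.choose (W ω + 1) t : ℝ) ∂P)
            - ∫ ω, β (W ω) * (Nat.choose (W ω) t : ℝ) ∂P))
        = (∑ t ∈ Finset.range (n+1), ndiff^[t] f 0 *
            ∫ ω, α (W ω) * (Nat.choose (W ω + 1) t : ℝ) ∂P)
          - ∑ t ∈ Finset.range (n+1), ndiff^[t] f 0 *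
            ∫ ω, β (W ω) * (Nat.choose (W ω) t : ℝ) ∂P from by
      rw [← Finset.sum_sub_distrib]
      exact Finset.sum_congr rfl fun t _ => by ring]
    ring
  calc |((∑ t ∈ Finset.range (n+1), ndiff^[t] f 0 *
        ∫ ω, α (W ω) * (Nat.choose (W ω + 1) t : ℝ) ∂P)
        + a * ∫ ω, nrem f n (Wα ω) ∂P₁)
      - ((∑ t ∈ Finset.range (n+1), ndiff^[t] f 0 *
        ∫ ω, β (W ω) * (Nat.choose (W ω) t : ℝ) ∂P)
        + b * ∫ ω, nrem f n (Wβ ω) ∂P₂)|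
      = |(∑ t ∈ Finset.range (n+1), ndiff^[t] f 0 *
          ((∫ ω, α (W ω) * (Nat.choose (W ω + 1) t : ℝ) ∂P)
            - ∫ ω, β (W ω) * (Nat.choose (W ω) t : ℝ) ∂P))
        + (a * (∫ ω, nrem f n (Wα ω) ∂P₁) - b * ∫ ω, nrem f n (Wβ ω) ∂P₂)| := by rw [e]
    _ ≤ |∑ t ∈ Finset.range (n+1), ndiff^[t] f 0 *
          ((∫ ω, α (W ω) * (Nat.choose (W ω + 1) t : ℝ) ∂P)
            - ∫ ω, β (W ω) * (Nat.choose (W ω) t : ℝ) ∂P)|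
        + |a * (∫ ω, nrem f n (Wα ω) ∂P₁) - b * ∫ ω, nrem f n (Wβ ω) ∂P₂| := abs_add_le _ _
    _ ≤ (∑ t ∈ Finset.range (n+1), |ndiff^[t] f 0| *
          |(∫ ω, α (W ω) * (Nat.choose (W ω + 1) t : ℝ) ∂P)
            - ∫ ω, β (W ω) * (Nat.choose (W ω) t : ℝ) ∂P|)
        + M * (a * (∫ ω, (Nat.choose (Wα ω) (n+1) : ℝ) ∂P₁)
          - 2 * a * p * (∫ ω, (Nat.choose (Wβ ω - Y ω) (n+1) : ℝ) ∂P₂)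
          + (a * p + |a * p - b|) * ∫ ω, (Nat.choose (Wβ ω) (n+1) : ℝ) ∂P₂) := by
        refine add_le_add ?_ hrem
        refine (Finset.abs_sum_le_sum_abs _ _).trans (le_of_eq ?_)
        exact Finset.sum_congr rfl fun t _ => abs_mul _ _
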